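/- Let f ∈ ℂ[X] have degree m ≥ 1 with leading coefficient a_m, and let σ_1, …, σ_m ∈ ℂ be pairwise distinct interpolation values. Define the defects d_k = f(σ_k) / (a_m · ∏_{j ≠ k} (σ_k − σ_j)) and the accompanying ECP matrix E = Diag(σ) − 1·dᵀ. Then for every λ ∈ ℂ, det(E − λ·I_m) = (−1)^m · f(λ)/a_m; equivalently, the characteristic polynomial det(λ·I_m − E) of E equals f/a_m, so the eigenvalues of E are exactly the zeros of f (with multiplicities). -/

import Mathlib

open Matrix Polynomial BigOperators

theorem ecp_aux_eval_charpoly {m : ℕ} (M : Matrix (Fin m) (Fin m) ℂ) (x : ℂ) :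
    M.charpoly.eval x = (x • (1 : Matrix (Fin m) (Fin m) ℂ) - M).det := by
  rw [Matrix.charpoly, ← Polynomial.coe_evalRingHom, RingHom.map_det]
  congr 1
  ext i j
  by_cases h : i = j <;>
    simp [charmatrix_apply, Matrix.one_apply, Matrix.diagonal_apply, h]

theorem ecp_aux_det_diag_sub_rank_one {m : ℕ} (c d : Fin m → ℂ) (hc : ∀ j, c j ≠ 0) :
    (Matrix.diagonal c - Matrix.of fun (_ i : Fin m) => d i).det =
      (∏ j, c j) - ∑ k, d k * ∏ j ∈ Finset.univ.erase k, c j := by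
  have hA : IsUnit (Matrix.diagonal c).det := by
    rw [det_diagonal]
    exact (Finset.prod_ne_zero_iff.mpr fun j _ => hc j).isUnit
  have hinv : (Matrix.diagonal c)⁻¹ = Matrix.diagonal (fun j => (c j)⁻¹) :=
    Matrix.inv_eq_right_inv (by
      rw [Matrix.diagonal_mul_diagonal]
      convert Matrix.diagonal_one using 2
      funext i
      exact mul_inv_cancel₀ (hc i))
  have hrw : Matrix.diagonal c - Matrix.of (fun (_ i : Fin m) => d i) =
      Matrix.diagonal c + Matrix.replicateCol Unit (1 : Fin m → ℂ) * Matrix.replicateRow Unit (-d) := by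
    ext i j
    simp [Matrix.mul_apply, sub_eq_add_neg]
  rw [hrw, Matrix.det_add_replicateCol_mul_replicateRow hA, det_diagonal, Matrix.det_unique, hinv]
  simp only [Matrix.add_apply, Matrix.one_apply_eq, Matrix.mul_apply,
    Matrix.replicateRow_apply, Matrix.replicateCol_apply, Pi.neg_apply, Pi.one_apply,
    Finset.univ_unique, Finset.sum_singleton, mul_one,
    Matrix.diagonal_apply]
  have hin : ∀ i, (∑ x : Fin m,
      -d x * if x = i then (c x)⁻¹ else 0) = -(d i * (c i)⁻¹) := by
    intro i
    rw [Finset.sum_eq_single i]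
    · simp [mul_assoc]
    · intro b _ hb; simp [hb]
    · simp
  simp only [hin]
  rw [mul_add, mul_one, Finset.mul_sum, sub_eq_add_neg, ← Finset.sum_neg_distrib]
  congr 1
  refine Finset.sum_congr rfl fun k _ => ?_
  rw [← Finset.mul_prod_erase _ _ (Finset.mem_univ k)]
  field_simp [hc k]

theorem ecp_aux_lagrange {m : ℕ} (f : Polynomial ℂ)
    (hdeg : f.natDegree = m) (hm : 1 ≤ m) (σ : Fin m → ℂ) (hσ : Function.Injective σ)
    (x : ℂ) (hx : ∀ i, x ≠ σ i) :
    f.eval x = f.leadingCoeff * ∏ j, (x - σ j) +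
      ∑ k, (f.eval (σ k) / ∏ j ∈ Finset.univ.erase k, (σ k - σ j)) *
        ∏ j ∈ Finset.univ.erase k, (x - σ j) := by
  have hf0 : f ≠ 0 := fun h => by simp [h] at hdeg; omega
  set a := f.leadingCoeff with ha
  set g := f - C a * Lagrange.nodal Finset.univ σ with hg
  have hcard : (Finset.univ : Finset (Fin m)).card = m := by simp
  have hdegnodal : (C a * Lagrange.nodal Finset.univ σ).degree = (m : ℕ) := by
    rw [degree_C_mul (leadingCoeff_ne_zero.mpr hf0), Lagrange.degree_nodal, hcard]
  have hdeg' : f.degree = (m : ℕ) := by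
    rw [degree_eq_natDegree hf0, hdeg]
  have hlt : g.degree < (m : ℕ) := by
    rw [hg]
    have := Polynomial.degree_sub_lt (hdeg'.trans hdegnodal.symm) hf0 ?lc
    · rwa [hdeg'] at this
    case lc =>
      rw [leadingCoeff_mul, leadingCoeff_C, (Lagrange.nodal_monic).leadingCoeff, mul_one]
  have hInj : Set.InjOn σ (Finset.univ : Finset (Fin m)) := hσ.injOn
  have hgval : ∀ i ∈ (Finset.univ : Finset (Fin m)), g.eval (σ i) = f.eval (σ i) := by
    intro i _
    simp [hg, Lagrange.eval_nodal_at_node (Finset.mem_univ i)]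
  have hgi : g = Lagrange.interpolate Finset.univ σ (fun i => f.eval (σ i)) :=
    Lagrange.eq_interpolate_of_eval_eq _ hInj (by rwa [hcard]) hgval
  have hx' : ∀ i ∈ (Finset.univ : Finset (Fin m)), x ≠ σ i := fun i _ => hx i
  have heg : g.eval x = (∏ j, (x - σ j)) *
      ∑ i, Lagrange.nodalWeight Finset.univ σ i * (x - σ i)⁻¹ * f.eval (σ i) := by
    rw [hgi, Lagrange.eval_interpolate_not_at_node _ hx', Lagrange.eval_nodal]
  have hterm : ∀ k, (∏ j, (x - σ j)) *
      (Lagrange.nodalWeight Finset.univ σ k * (x - σ k)⁻¹ * f.eval (σ k)) =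
      (f.eval (σ k) / ∏ j ∈ Finset.univ.erase k, (σ k - σ j)) *
        ∏ j ∈ Finset.univ.erase k, (x - σ j) := by
    intro k
    have hxk : x - σ k ≠ 0 := sub_ne_zero_of_ne (hx k)
    have hsk : ∀ j ∈ Finset.univ.erase k, σ k - σ j ≠ 0 := fun j hj =>
      sub_ne_zero_of_ne fun h => (Finset.mem_erase.mp hj).1 (hσ h.symm)
    have hprod : (∏ j ∈ Finset.univ.erase k, (σ k - σ j)) ≠ 0 :=
      Finset.prod_ne_zero_iff.mpr hsk
    rw [Lagrange.nodalWeight, Finset.prod_inv_distrib,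
      ← Finset.mul_prod_erase _ _ (Finset.mem_univ k)]
    field_simp
  calc f.eval x = a * ∏ j, (x - σ j) + g.eval x := by
        simp [hg, Lagrange.eval_nodal]
    _ = _ := by
        rw [heg, Finset.mul_sum]
        congr 1
        exact Finset.sum_congr rfl fun k _ => hterm k

theorem ecp_charpoly {m : ℕ} (hm : 1 ≤ m) (f : Polynomial ℂ)
    (hdeg : f.natDegree = m) (σ : Fin m → ℂ) (hσ : Function.Injective σ)
    (d : Fin m → ℂ)
    (hd : ∀ k, d k = f.eval (σ k) /
        (f.leadingCoeff * ∏ j ∈ Finset.univ.erase k, (σ k - σ j))) :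
    (∀ lam : ℂ,
        ((Matrix.diagonal σ - Matrix.of fun (_ i : Fin m) => d i) -
            lam • (1 : Matrix (Fin m) (Fin m) ℂ)).det =
          (-1 : ℂ) ^ m * f.eval lam / f.leadingCoeff) ∧
    (Matrix.diagonal σ - Matrix.of fun (_ i : Fin m) => d i).charpoly =
      Polynomial.C f.leadingCoeff⁻¹ * f := by
  have hf0 : f ≠ 0 := fun h => by simp [h] at hdeg; omega
  have ha : f.leadingCoeff ≠ 0 := leadingCoeff_ne_zero.mpr hf0
  set a := f.leadingCoeff with haa
  set E := Matrix.diagonal σ - Matrix.of fun (_ i : Fin m) => d i with hE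
  -- key determinant computation at non-nodes
  have key : ∀ x : ℂ, (∀ i, x ≠ σ i) →
      (E - x • (1 : Matrix (Fin m) (Fin m) ℂ)).det =
        (-1 : ℂ) ^ m * f.eval x / a := by
    intro x hx
    have hc : ∀ j, σ j - x ≠ 0 := fun j => sub_ne_zero_of_ne fun h => hx j h.symm
    have hEx : E - x • (1 : Matrix (Fin m) (Fin m) ℂ) =
        Matrix.diagonal (fun j => σ j - x) - Matrix.of fun (_ i : Fin m) => d i := by
      ext i j
      by_cases h : i = j <;>
        simp [hE, Matrix.one_apply, Matrix.diagonal_apply, h, sub_right_comm]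
    rw [hEx, ecp_aux_det_diag_sub_rank_one _ _ hc]
    have hpow : (-1 : ℂ) ^ m = -(-1 : ℂ) ^ (m - 1) := by
      conv_lhs => rw [show m = (m - 1) + 1 by omega]
      rw [pow_succ]
      ring
    have h1 : ∏ j, (σ j - x) = (-1 : ℂ) ^ m * ∏ j, (x - σ j) := by
      rw [show (fun j => σ j - x) = fun j => -1 * (x - σ j) by funext j; ring,
        Finset.prod_mul_distrib, Finset.prod_const, Finset.card_univ, Fintype.card_fin]
    have h2 : ∀ k, (∏ j ∈ Finset.univ.erase k, (σ j - x)) =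
        (-1 : ℂ) ^ (m - 1) * ∏ j ∈ Finset.univ.erase k, (x - σ j) := by
      intro k
      rw [show (fun j => σ j - x) = fun j => -1 * (x - σ j) by funext j; ring,
        Finset.prod_mul_distrib, Finset.prod_const, Finset.card_erase_of_mem
          (Finset.mem_univ k), Finset.card_univ, Fintype.card_fin]
    have hL := ecp_aux_lagrange f hdeg hm σ hσ x hx
    rw [h1]
    rw [Finset.sum_congr rfl (fun k _ => by rw [h2 k])]
    rw [hL]
    have hdk : ∀ k, d k = (f.eval (σ k) / ∏ j ∈ Finset.univ.erase k, (σ k - σ j)) / a := by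
      intro k
      rw [hd k, div_div]
      ring_nf
    rw [Finset.sum_congr rfl (fun k _ => by rw [hdk k])]
    have hsum : ∑ k, ((f.eval (σ k) / ∏ j ∈ Finset.univ.erase k, (σ k - σ j)) / a) *
        ((-1 : ℂ) ^ (m - 1) * ∏ j ∈ Finset.univ.erase k, (x - σ j)) =
        ((-1 : ℂ) ^ (m - 1) / a) *
          ∑ k, (f.eval (σ k) / ∏ j ∈ Finset.univ.erase k, (σ k - σ j)) *
            ∏ j ∈ Finset.univ.erase k, (x - σ j) := by
      rw [Finset.mul_sum]
      exact Finset.sum_congr rfl fun k _ => by ring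
    rw [hsum, hpow]
    field_simp
    ring
  have hchar : E.charpoly = C a⁻¹ * f := by
    apply Polynomial.eq_of_infinite_eval_eq
    apply Set.Infinite.mono (s := (Set.range σ)ᶜ)
    · intro x hx
      have hx' : ∀ i, x ≠ σ i := fun i h => hx ⟨i, h.symm⟩
      simp only [Set.mem_setOf_eq]
      have hneg : x • (1 : Matrix (Fin m) (Fin m) ℂ) - E =
          -(E - x • (1 : Matrix (Fin m) (Fin m) ℂ)) := (neg_sub _ _).symm
      rw [ecp_aux_eval_charpoly, hneg, Matrix.det_neg, Fintype.card_fin, key x hx',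
        eval_mul, eval_C]
      have hsq : (-1 : ℂ) ^ m * ((-1 : ℂ) ^ m) = 1 := by
        rw [← pow_add, ← two_mul, pow_mul]
        norm_num
      have hstep : (-1 : ℂ) ^ m * ((-1 : ℂ) ^ m * f.eval x / a) =
          ((-1 : ℂ) ^ m * (-1 : ℂ) ^ m) * (f.eval x / a) := by ring
      rw [hstep, hsq, one_mul, div_eq_mul_inv]
      ring
    · exact (Set.finite_range σ).infinite_compl
  refine ⟨fun lam => ?_, hchar⟩
  have hneg : E - lam • (1 : Matrix (Fin m) (Fin m) ℂ) =
      -(lam • (1 : Matrix (Fin m) (Fin m) ℂ) - E) := (neg_sub _ _).symm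
  rw [hneg, Matrix.det_neg, Fintype.card_fin, ← ecp_aux_eval_charpoly, hchar,
    eval_mul, eval_C, div_eq_mul_inv]
  ring
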